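/- Let n ≥ 2, let s = s_n be the n-th Sylvester number, and let a_{n+1} = (s^2 - s + 2)/4 if n is even and a_{n+1} = (s^2 - 3s + 4)/4 if n is odd. Then gcd(a_{n+1}, s - 1) = 1. -/

import Mathlib

def sylvester : ℕ → ℕ
  | 0 => 2
  | n + 1 => sylvester n * (sylvester n - 1) + 1

lemma sylvester_mod8 (n : ℕ) (h : 2 ≤ n) :
    (Even n → sylvester n % 8 = 7) ∧ (¬ Even n → sylvester n % 8 = 3) := by
  induction n with
  | zero => omega
  | succ k ih =>
    rcases Nat.lt_or_ge k 2 with hk | hk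
    · have hk1 : k = 1 := by omega
      subst hk1
      refine ⟨fun _ => by decide, fun h2 => absurd (by decide) h2⟩
    · obtain ⟨h7, h3⟩ := ih hk
      by_cases he : Even k
      · have hs := h7 he
        obtain ⟨q, hq⟩ : ∃ q, sylvester k = 8 * q + 7 := ⟨sylvester k / 8, by omega⟩
        have hval : sylvester (k + 1) = 64 * (q * q) + 104 * q + 43 := by
          show sylvester k * (sylvester k - 1) + 1 = _
          rw [hq]
          have : 8 * q + 7 - 1 = 8 * q + 6 := by omega
          rw [this]; ring
        have hne : ¬ Even (k + 1) := by simp [Nat.even_add_one, he]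
        exact ⟨fun h1 => absurd h1 hne, fun _ => by omega⟩
      · have hs := h3 he
        obtain ⟨q, hq⟩ : ∃ q, sylvester k = 8 * q + 3 := ⟨sylvester k / 8, by omega⟩
        have hval : sylvester (k + 1) = 64 * (q * q) + 40 * q + 7 := by
          show sylvester k * (sylvester k - 1) + 1 = _
          rw [hq]
          have : 8 * q + 3 - 1 = 8 * q + 2 := by omega
          rw [this]; ring
        have hev : Even (k + 1) := by simpa [Nat.even_add_one] using he
        exact ⟨fun _ => by omega, fun h1 => absurd hev h1⟩

theorem gcd_top_weight_s_sub_one (n : ℕ) (hn : 2 ≤ n) (A : ℤ)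
    (hA : (Even n ∧ 4 * A = (sylvester n : ℤ) ^ 2 - (sylvester n : ℤ) + 2) ∨
          (Odd n ∧ 4 * A = (sylvester n : ℤ) ^ 2 - 3 * (sylvester n : ℤ) + 4)) :
    Int.gcd A ((sylvester n : ℤ) - 1) = 1 := by
  obtain ⟨h7, h3⟩ := sylvester_mod8 n hn
  set s : ℤ := (sylvester n : ℤ) with hs
  set g : ℕ := Int.gcd A (s - 1) with hg
  have h1 : (g : ℤ) ∣ A := Int.gcd_dvd_left A (s - 1)
  have h2 : (g : ℤ) ∣ s - 1 := Int.gcd_dvd_right A (s - 1)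
  -- A is odd, and s - 1 divides 4A - 2
  have hodd : A % 2 = 1 := by
    rcases hA with ⟨hev, hA4⟩ | ⟨hod, hA4⟩
    · have hm8 : sylvester n % 8 = 7 := h7 hev
      obtain ⟨k, hk⟩ : ∃ k : ℤ, s = 8 * k + 7 :=
        ⟨(sylvester n : ℤ) / 8, by rw [hs]; omega⟩
      rw [hk] at hA4
      have hA2 : 4 * A = 64 * (k * k) + 104 * k + 44 := by linear_combination hA4
      have : ∃ m : ℤ, 4 * A = 64 * m + 104 * k + 44 := ⟨k * k, hA2⟩
      obtain ⟨m, hm⟩ := this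
      omega
    · have hm8 : sylvester n % 8 = 3 := h3 (Nat.not_even_iff_odd.mpr hod)
      obtain ⟨k, hk⟩ : ∃ k : ℤ, s = 8 * k + 3 :=
        ⟨(sylvester n : ℤ) / 8, by rw [hs]; omega⟩
      rw [hk] at hA4
      have hA2 : 4 * A = 64 * (k * k) + 24 * k + 4 := by linear_combination hA4
      have : ∃ m : ℤ, 4 * A = 64 * m + 24 * k + 4 := ⟨k * k, hA2⟩
      obtain ⟨m, hm⟩ := this
      omega
  have hdvd42 : (s - 1) ∣ 4 * A - 2 := by
    rcases hA with ⟨_, hA4⟩ | ⟨_, hA4⟩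
    · exact ⟨s, by linear_combination hA4⟩
    · exact ⟨s - 2, by linear_combination hA4⟩
  have hg4A : (g : ℤ) ∣ 4 * A := Dvd.dvd.mul_left h1 4
  have hg42 : (g : ℤ) ∣ 4 * A - 2 := h2.trans hdvd42
  have hg2 : (g : ℤ) ∣ 2 := by
    have := dvd_sub hg4A hg42
    have heq : 4 * A - (4 * A - 2) = 2 := by ring
    rwa [heq] at this
  have hg2n : g ∣ 2 := by exact_mod_cast hg2
  have hle : g ≤ 2 := Nat.le_of_dvd (by norm_num) hg2n
  interval_cases g
  · exact absurd hg2n (by decide)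
  · rfl
  · exfalso
    obtain ⟨c, hc⟩ := h1
    omega
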